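/- Let 2 ≤ k ≤ n−2. (i) For every λ ∈ λ⁺_{k,n} there exists an (n−k+2)×n real matrix Λ with alt(Λ) ∈ Gr_{>0}(n−k+2,n) such that the row span of λ is contained in the row span of Λ. (ii) For every λ̃ ∈ λ̃⁺_{k,n} there exists a (k+2)×n real matrix Λ̃ ∈ Gr_{>0}(k+2,n) such that the row span of λ̃ is contained in the row span of Λ̃. -/

import Mathlib

open scoped Matrix

/-- Twisted-cyclic extension of a vector `x : Fin n → ℝ` to indices in `ℤ`,
with `x_{i+n} = ε • x_i`. -/
noncomputable def vecExt {n : ℕ} (ε : ℝ) (x : Fin n → ℝ) (i : ℤ) : ℝ :=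
  if h : 0 < n then
    ε ^ (i / (n : ℤ)) *
      x ⟨(i % (n : ℤ)).toNat, by
        have hn : (0 : ℤ) < (n : ℤ) := by exact_mod_cast h
        have h1 : 0 ≤ i % (n : ℤ) := Int.emod_nonneg i hn.ne'
        have h2 : i % (n : ℤ) < (n : ℤ) := Int.emod_lt_of_pos i hn
        omega⟩
  else 0

/-- Twisted-cyclic extension of the columns of a matrix. -/
noncomputable def colExt {m n : ℕ} (ε : ℝ) (A : Matrix (Fin m) (Fin n) ℝ) (i : ℤ) :
    Fin m → ℝ :=
  fun r => vecExt ε (fun j => A r j) i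

/-- The bracket `⟨i j⟩ = det(λ_i, λ_j)` of two (extended) columns of a `2 × n` matrix. -/
noncomputable def brkt {n : ℕ} (ε : ℝ) (A : Matrix (Fin 2) (Fin n) ℝ) (i j : ℤ) : ℝ :=
  colExt ε A i 0 * colExt ε A j 1 - colExt ε A i 1 * colExt ε A j 0

/-- The sign `(-1)^(k-1)` used in the twisted cyclic symmetry. -/
noncomputable def sgn (k : ℤ) : ℝ := (-1 : ℝ) ^ (k - 1)

/-- The angle in `[0, π]` between two vectors in `ℝ²`. -/
noncomputable def ang2 (v w : Fin 2 → ℝ) : ℝ :=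
  Real.arccos ((v 0 * w 0 + v 1 * w 1) /
    (Real.sqrt (v 0 ^ 2 + v 1 ^ 2) * Real.sqrt (w 0 ^ 2 + w 1 ^ 2)))

/-- The total winding angle of the columns of a `2 × n` matrix. -/
noncomputable def wind {n : ℕ} (ε : ℝ) (A : Matrix (Fin 2) (Fin n) ℝ) : ℝ :=
  ∑ i ∈ Finset.range n, ang2 (colExt ε A (i : ℤ)) (colExt ε A ((i : ℤ) + 1))

/-- The set `λ⁺_{k,n}`. -/
noncomputable def lamPlus (n : ℕ) (k : ℤ) (A : Matrix (Fin 2) (Fin n) ℝ) : Prop :=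
  (∀ i ∈ Finset.range n, 0 < brkt (sgn k) A (i : ℤ) ((i : ℤ) + 1)) ∧
  wind (sgn k) A = ((k : ℝ) - 1) * Real.pi

/-- The set `λ̃⁺_{k,n}`. -/
noncomputable def latPlus (n : ℕ) (k : ℤ) (A : Matrix (Fin 2) (Fin n) ℝ) : Prop :=
  (∀ i ∈ Finset.range n, 0 < brkt (sgn k) A (i : ℤ) ((i : ℤ) + 1)) ∧
  wind (sgn k) A = ((k : ℝ) + 1) * Real.pi

/-- The set `λλ̃⁺_{k,n}` of pairs with momentum conservation. -/
noncomputable def lamlatPlus (n : ℕ) (k : ℤ) (lam lat : Matrix (Fin 2) (Fin n) ℝ) : Prop :=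
  lamPlus n k lam ∧ latPlus n k lat ∧ lam * lat.transpose = 0

/-- The row span of a matrix, as a submodule of `ℝⁿ`. -/
def rowSpan {m n : ℕ} (A : Matrix (Fin m) (Fin n) ℝ) : Submodule ℝ (Fin n → ℝ) :=
  Submodule.span ℝ (Set.range fun i => A i)

/-- All maximal minors are nonnegative. -/
def nonnegMinors {k n : ℕ} (C : Matrix (Fin k) (Fin n) ℝ) : Prop :=
  ∀ f : Fin k → Fin n, StrictMono f → 0 ≤ (C.submatrix id f).det

/-- All maximal minors are positive. -/
def posMinors {k n : ℕ} (C : Matrix (Fin k) (Fin n) ℝ) : Prop :=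
  ∀ f : Fin k → Fin n, StrictMono f → 0 < (C.submatrix id f).det

/-- `C` represents a point of the totally nonnegative Grassmannian `Gr_{≥0}(k,n)`. -/
def GrNonneg {k n : ℕ} (C : Matrix (Fin k) (Fin n) ℝ) : Prop :=
  C.rank = k ∧ nonnegMinors C

/-- `C` represents a point of the totally positive Grassmannian `Gr_{>0}(k,n)`. -/
def GrPos {k n : ℕ} (C : Matrix (Fin k) (Fin n) ℝ) : Prop :=
  C.rank = k ∧ posMinors C

/-- `alt` negates every second column. -/
def altM {m n : ℕ} (A : Matrix (Fin m) (Fin n) ℝ) : Matrix (Fin m) (Fin n) ℝ :=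
  Matrix.of fun i j => (-1 : ℝ) ^ (j : ℕ) * A i j

/-- `(2,0)`-nondegeneracy: consecutive columns are linearly independent. -/
def Nondeg20 (n : ℕ) (k : ℤ) {m : ℕ} (C : Matrix (Fin m) (Fin n) ℝ) : Prop :=
  ∀ i : ℤ, LinearIndependent ℝ ![colExt (sgn k) C i, colExt (sgn k) C (i + 1)]

/-- `(0,2)`-nondegeneracy: `C_i ∈ span(C_{i+1}, …, C_{i+n-2})`. -/
def Nondeg02 (n : ℕ) (k : ℤ) {m : ℕ} (C : Matrix (Fin m) (Fin n) ℝ) : Prop :=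
  ∀ i : ℤ, colExt (sgn k) C i ∈
    Submodule.span ℝ ((fun t : ℤ => colExt (sgn k) C t) '' Set.Icc (i + 1) (i + (n : ℤ) - 2))

/-- Connectedness of a matrix: no cyclic splitting of the columns into a direct sum. -/
def ConnMat (n : ℕ) (k : ℤ) {m : ℕ} (C : Matrix (Fin m) (Fin n) ℝ) : Prop :=
  ¬ ∃ i j : ℤ, i < j ∧ j < i + (n : ℤ) ∧
    IsCompl (Submodule.span ℝ ((fun t : ℤ => colExt (sgn k) C t) '' Set.Icc i (j - 1)))
      (Submodule.span ℝ ((fun t : ℤ => colExt (sgn k) C t) '' Set.Icc j (i + (n : ℤ) - 1)))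

/-- `C` represents a point of `Gr_{≥2}(k,n)`: totally nonnegative, connected,
and 2-nondegenerate. -/
def GrGe2 (n k : ℕ) (C : Matrix (Fin k) (Fin n) ℝ) : Prop :=
  GrNonneg C ∧ Nondeg20 n (k : ℤ) C ∧ Nondeg02 n (k : ℤ) C ∧ ConnMat n (k : ℤ) C

/-- The orthogonal complement of a subspace of `ℝⁿ` with respect to the dot product. -/
noncomputable def perpSub {n : ℕ} (U : Submodule ℝ (Fin n → ℝ)) : Submodule ℝ (Fin n → ℝ) where
  carrier := {v | ∀ u ∈ U, dotProduct v u = 0}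
  zero_mem' := fun u _ => zero_dotProduct u
  add_mem' := fun {a b} ha hb u hu => by
    rw [add_dotProduct, ha u hu, hb u hu, add_zero]
  smul_mem' := fun c v hv u hu => by
    rw [smul_dotProduct, hv u hu, smul_zero]

/-- The planar Mandelstam variables. -/
noncomputable def Mand {n : ℕ} (ε : ℝ) (lam lat : Matrix (Fin 2) (Fin n) ℝ) (i j : ℤ) : ℝ :=
  ∑ p ∈ Finset.Ioc i j, ∑ q ∈ Finset.Ioc p j, brkt ε lam p q * brkt ε lat p q

/-- `Q` is the magic projector `Q_λ`: it is determined by its action on row vectors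
(extended twisted-cyclically with sign `εx`, the brackets of `lam` using sign `εl`). -/
def IsQmat {n : ℕ} (εx εl : ℝ) (lam : Matrix (Fin 2) (Fin n) ℝ)
    (Q : Matrix (Fin n) (Fin n) ℝ) : Prop :=
  ∀ (x : Fin n → ℝ) (b : Fin n),
    Matrix.vecMul x Q b =
      (vecExt εx x (((b : ℕ) : ℤ) - 1) * brkt εl lam ((b : ℕ) : ℤ) (((b : ℕ) : ℤ) + 1)
        + vecExt εx x ((b : ℕ) : ℤ) * brkt εl lam (((b : ℕ) : ℤ) + 1) (((b : ℕ) : ℤ) - 1)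
        + vecExt εx x (((b : ℕ) : ℤ) + 1) * brkt εl lam (((b : ℕ) : ℤ) - 1) ((b : ℕ) : ℤ))
      / (brkt εl lam (((b : ℕ) : ℤ) - 1) ((b : ℕ) : ℤ) *
          brkt εl lam ((b : ℕ) : ℤ) (((b : ℕ) : ℤ) + 1))

/-- The coefficients `t^λ_i`. -/
noncomputable def tcoef {n : ℕ} (ε : ℝ) (lam : Matrix (Fin 2) (Fin n) ℝ) (j : ℤ) : ℝ :=
  brkt ε lam (j + 1) (j - 1) / (brkt ε lam (j - 1) j * brkt ε lam j (j + 1))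

/-- The involution `Θ` on `2 × n` matrices. -/
noncomputable def Theta {n : ℕ} (ε : ℝ) (lam : Matrix (Fin 2) (Fin n) ℝ) :
    Matrix (Fin 2) (Fin n) ℝ :=
  Matrix.of fun r j =>
    (-1 : ℝ) ^ (j : ℕ) * tcoef ε lam ((j : ℕ) : ℤ) * (if r = 0 then lam 0 j else -(lam 1 j))

/-- The Minkowski bilinear form on `ℝ^{2,2} ≅ ℂ²`. -/
noncomputable def minkDot (P Q : ℂ × ℂ) : ℝ :=
  (P.1 * (starRingEnd ℂ) Q.1 - P.2 * (starRingEnd ℂ) Q.2).re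



section Stmt4Aux
open Real Finset

lemma vecExt_of_lt {n : ℕ} (ε : ℝ) (x : Fin n → ℝ) (i : ℕ) (h : i < n) :
    vecExt ε x (i : ℤ) = x ⟨i, h⟩ := by
  have hn : 0 < n := lt_of_le_of_lt (Nat.zero_le _) h
  rw [vecExt, dif_pos hn]
  have h1 : (i : ℤ) / (n : ℤ) = 0 := Int.ediv_eq_zero_of_lt (by positivity) (by exact_mod_cast h)
  have h2 : (i : ℤ) % (n : ℤ) = (i : ℤ) := Int.emod_eq_of_lt (by positivity) (by exact_mod_cast h)
  simp only [h1, h2, zpow_zero, one_mul]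
  congr 1

lemma vecExt_n {n : ℕ} (ε : ℝ) (x : Fin n → ℝ) (hn : 0 < n) :
    vecExt ε x (n : ℤ) = ε * x ⟨0, hn⟩ := by
  rw [vecExt, dif_pos hn]
  have hn' : (0:ℤ) < (n:ℤ) := by exact_mod_cast hn
  have h1 : (n : ℤ) / (n : ℤ) = 1 := Int.ediv_self (by omega)
  have h2 : (n : ℤ) % (n : ℤ) = 0 := Int.emod_self
  simp only [h1, h2, zpow_one]
  norm_num

set_option maxHeartbeats 1000000 in
lemma polar_step (v w : Fin 2 → ℝ) (hd : 0 < v 0 * w 1 - v 1 * w 0) :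
    (0 < ang2 v w ∧ ang2 v w < π) ∧
    ∀ t : ℝ, v 0 = Real.sqrt (v 0 ^ 2 + v 1 ^ 2) * Real.cos t →
      v 1 = Real.sqrt (v 0 ^ 2 + v 1 ^ 2) * Real.sin t →
      w 0 = Real.sqrt (w 0 ^ 2 + w 1 ^ 2) * Real.cos (t + ang2 v w) ∧
      w 1 = Real.sqrt (w 0 ^ 2 + w 1 ^ 2) * Real.sin (t + ang2 v w) := by
  set D := v 0 * w 1 - v 1 * w 0 with hD
  set P := v 0 * w 0 + v 1 * w 1 with hP
  have key : (v 0 ^ 2 + v 1 ^ 2) * (w 0 ^ 2 + w 1 ^ 2) = P ^ 2 + D ^ 2 := by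
    rw [hP, hD]; ring
  have hQv : 0 < v 0 ^ 2 + v 1 ^ 2 := by nlinarith [sq_nonneg (v 0), sq_nonneg (v 1), sq_nonneg (w 0), sq_nonneg (w 1), sq_nonneg P]
  have hQw : 0 < w 0 ^ 2 + w 1 ^ 2 := by nlinarith [sq_nonneg (v 0), sq_nonneg (v 1), sq_nonneg (w 0), sq_nonneg (w 1), sq_nonneg P]
  set nv := Real.sqrt (v 0 ^ 2 + v 1 ^ 2) with hnv
  set nw := Real.sqrt (w 0 ^ 2 + w 1 ^ 2) with hnw
  have hnv0 : 0 < nv := Real.sqrt_pos.2 hQv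
  have hnw0 : 0 < nw := Real.sqrt_pos.2 hQw
  have hnv2 : nv ^ 2 = v 0 ^ 2 + v 1 ^ 2 := Real.sq_sqrt hQv.le
  have hnw2 : nw ^ 2 = w 0 ^ 2 + w 1 ^ 2 := Real.sq_sqrt hQw.le
  have hprod : 0 < nv * nw := mul_pos hnv0 hnw0
  set X := P / (nv * nw) with hX
  have hkey2 : (nv * nw) ^ 2 = P ^ 2 + D ^ 2 := by rw [mul_pow, hnv2, hnw2, key]
  have hXlt : X < 1 := by
    rw [hX, div_lt_one hprod]
    nlinarith [sq_nonneg (P - nv * nw), sq_nonneg D]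
  have hXgt : -1 < X := by
    rw [hX, lt_div_iff₀ hprod]
    nlinarith [sq_nonneg (P + nv * nw), sq_nonneg D]
  have hang : ang2 v w = Real.arccos X := rfl
  have hcos : Real.cos (ang2 v w) = X := by
    rw [hang]; exact Real.cos_arccos hXgt.le hXlt.le
  have hsin : Real.sin (ang2 v w) = D / (nv * nw) := by
    rw [hang, Real.sin_arccos]
    have h1 : 1 - X ^ 2 = (D / (nv * nw)) ^ 2 := by
      rw [hX]
      field_simp
      nlinarith [hkey2]
    rw [h1, Real.sqrt_sq (by positivity)]
  refine ⟨⟨Real.arccos_pos.2 hXlt, lt_of_le_of_ne (Real.arccos_le_pi X) ?_⟩, ?_⟩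
  · intro h
    have := Real.arccos_eq_pi.1 h
    linarith
  · intro t h0 h1
    have hc : Real.cos t = v 0 / nv := by rw [h0]; field_simp
    have hs : Real.sin t = v 1 / nv := by rw [h1]; field_simp
    have hnv' : nv ≠ 0 := hnv0.ne'
    have hnw' : nw ≠ 0 := hnw0.ne'
    constructor
    · rw [Real.cos_add, hc, hs, hcos, hsin, hX]
      have e1 : v 0 / nv * (P / (nv * nw)) - v 1 / nv * (D / (nv * nw))
          = (v 0 * P - v 1 * D) / (nv ^ 2 * nw) := by
        field_simp
      have e2 : v 0 * P - v 1 * D = w 0 * nv ^ 2 := by rw [hP, hD, hnv2]; ring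
      rw [e1, e2]
      field_simp
    · rw [Real.sin_add, hc, hs, hcos, hsin, hX]
      have e1 : v 1 / nv * (P / (nv * nw)) + v 0 / nv * (D / (nv * nw))
          = (v 1 * P + v 0 * D) / (nv ^ 2 * nw) := by
        field_simp
      have e2 : v 1 * P + v 0 * D = w 1 * nv ^ 2 := by rw [hP, hD, hnv2]; ring
      rw [e1, e2]
      field_simp

lemma exists_polar (v : Fin 2 → ℝ) :
    ∃ t : ℝ, v 0 = Real.sqrt (v 0 ^ 2 + v 1 ^ 2) * Real.cos t ∧
      v 1 = Real.sqrt (v 0 ^ 2 + v 1 ^ 2) * Real.sin t := by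
  rcases eq_or_ne v 0 with rfl | hv
  · exact ⟨0, by simp⟩
  · set z : ℂ := ⟨v 0, v 1⟩ with hz
    have hz0 : z ≠ 0 := by
      intro h
      apply hv
      have h0 : z.re = 0 := by rw [h]; rfl
      have h1 : z.im = 0 := by rw [h]; rfl
      funext j
      fin_cases j
      · exact h0
      · exact h1
    have habs : ‖z‖ = Real.sqrt (v 0 ^ 2 + v 1 ^ 2) := by
      rw [Complex.norm_def, Complex.normSq_apply]
      norm_num [hz]
      ring_nf
    refine ⟨z.arg, ?_, ?_⟩
    · rw [Complex.cos_arg hz0, habs.symm]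
      have : (0:ℝ) < ‖z‖ := by
        simpa using (norm_pos_iff.2 hz0)
      field_simp
      rfl
    · rw [Complex.sin_arg, habs.symm]
      have : (0:ℝ) < ‖z‖ := by
        simpa using (norm_pos_iff.2 hz0)
      field_simp
      rfl

set_option maxHeartbeats 1000000 in
lemma polar_lift {n : ℕ} (hn : 2 ≤ n) (ε : ℝ) (A : Matrix (Fin 2) (Fin n) ℝ) (W : ℝ)
    (hb : ∀ i ∈ Finset.range n, 0 < brkt ε A (i : ℤ) ((i : ℤ) + 1))
    (hw : wind ε A = W) :
    ∃ r θ : ℕ → ℝ,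
      (∀ i, i < n → 0 < r i) ∧
      (∀ i (h : i < n), A 0 ⟨i, h⟩ = r i * Real.cos (θ i) ∧
        A 1 ⟨i, h⟩ = r i * Real.sin (θ i)) ∧
      (∀ i, i < n → 0 < θ (i + 1) - θ i ∧ θ (i + 1) - θ i < π) ∧
      (W - π < θ (n - 1) - θ 0 ∧ θ (n - 1) - θ 0 < W) := by
  -- the extended columns
  set c : ℕ → Fin 2 → ℝ := fun i => colExt ε A (i : ℤ) with hc
  set α : ℕ → ℝ := fun i => ang2 (colExt ε A (i : ℤ)) (colExt ε A ((i : ℤ) + 1)) with hα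
  have hdet : ∀ i, i < n → 0 < (colExt ε A (i : ℤ)) 0 * (colExt ε A ((i : ℤ) + 1)) 1
      - (colExt ε A (i : ℤ)) 1 * (colExt ε A ((i : ℤ) + 1)) 0 := by
    intro i hi
    exact hb i (Finset.mem_range.2 hi)
  have hαmem : ∀ i, i < n → 0 < α i ∧ α i < π := fun i hi => (polar_step _ _ (hdet i hi)).1
  -- α i relates consecutive columns for i+1 < n replaced by ℕ-cast
  have hcast : ∀ i : ℕ, ((i : ℤ) + 1) = ((i + 1 : ℕ) : ℤ) := by intro i; push_cast; ring
  -- norms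
  set N : ℕ → ℝ := fun i => Real.sqrt ((c i 0) ^ 2 + (c i 1) ^ 2) with hN
  -- base angle
  obtain ⟨t0, ht0⟩ := exists_polar (c 0)
  set θ : ℕ → ℝ := fun i => t0 + ∑ j ∈ Finset.range i, α j with hθ
  have hθsucc : ∀ i, θ (i + 1) = θ i + α i := by
    intro i
    simp only [hθ, Finset.sum_range_succ]
    ring
  -- main invariant
  have main : ∀ i, i < n → c i 0 = N i * Real.cos (θ i) ∧ c i 1 = N i * Real.sin (θ i) := by
    intro i
    induction i with
    | zero =>
      intro _
      simpa [hθ, hN] using ht0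
    | succ i ih =>
      intro hi1
      have hi : i < n := Nat.lt_of_succ_lt hi1
      have h2 := (polar_step _ _ (hdet i hi)).2 (θ i) (ih hi).1 (ih hi).2
      have hcc : colExt ε A ((i : ℤ) + 1) = c (i + 1) := by rw [hc]; rw [hcast i]
      rw [hcc] at h2
      rw [hθsucc i]
      exact h2
  -- positivity of norms
  have hNpos : ∀ i, i < n → 0 < N i := by
    intro i hi
    have hd := hdet i hi
    have h1 : 0 < (c i 0) ^ 2 + (c i 1) ^ 2 := by
      rcases (main i hi) with ⟨e0, e1⟩
      by_contra hle
      push_neg at hle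
      have h0 : (c i 0) ^ 2 + (c i 1) ^ 2 = 0 :=
        le_antisymm hle (by positivity)
      have hc0 : c i 0 = 0 := by nlinarith [sq_nonneg (c i 0), sq_nonneg (c i 1)]
      have hc1 : c i 1 = 0 := by nlinarith [sq_nonneg (c i 0), sq_nonneg (c i 1)]
      have hc0' : colExt ε A (i : ℤ) 0 = 0 := hc0
      have hc1' : colExt ε A (i : ℤ) 1 = 0 := hc1
      rw [hc0', hc1'] at hd
      simp at hd
    exact Real.sqrt_pos.2 h1
  -- wind identity
  have hwind : ∑ j ∈ Finset.range n, α j = W := by rw [← hw]; rfl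
  refine ⟨N, θ, hNpos, ?_, ?_, ?_⟩
  · intro i h
    have hm := main i h
    have hcol : ∀ r : Fin 2, c i r = A r ⟨i, h⟩ := by
      intro r
      rw [hc]
      exact vecExt_of_lt ε (fun j => A r j) i h
    rw [← hcol 0, ← hcol 1]
    exact hm
  · intro i hi
    rw [hθsucc i]
    have := hαmem i hi
    constructor <;> [linarith; linarith]
  · have hn1 : n - 1 + 1 = n := by omega
    have hsum : θ (n - 1) - θ 0 = ∑ j ∈ Finset.range (n - 1), α j := by
      simp [hθ]
    have hW : W = ∑ j ∈ Finset.range (n - 1), α j + α (n - 1) := by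
      rw [← hwind, ← hn1, Finset.sum_range_succ, hn1]
    have hlast : n - 1 < n := by omega
    have hαn := hαmem (n - 1) hlast
    rw [hsum]
    constructor <;> [linarith [hαn.2]; linarith [hαn.1]]

lemma prod_pairs {m : ℕ} (x : Fin m → ℝ) :
    ∏ i, ∏ j ∈ Finset.Ioi i, (x i * x j) = ∏ i, x i ^ (m - 1) := by
  have h1 : ∀ i : Fin m, ∏ j ∈ Finset.Ioi i, (x i * x j)
      = x i ^ (m - 1 - (i : ℕ)) * ∏ j ∈ Finset.Ioi i, x j := by
    intro i
    rw [Finset.prod_mul_distrib, Finset.prod_const, Fin.card_Ioi]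
  calc ∏ i, ∏ j ∈ Finset.Ioi i, (x i * x j)
      = ∏ i, (x i ^ (m - 1 - (i : ℕ)) * ∏ j ∈ Finset.Ioi i, x j) := by
        exact Finset.prod_congr rfl (fun i _ => h1 i)
    _ = (∏ i, x i ^ (m - 1 - (i : ℕ))) * ∏ i, ∏ j ∈ Finset.Ioi i, x j := by
        rw [Finset.prod_mul_distrib]
    _ = (∏ i, x i ^ (m - 1 - (i : ℕ))) * ∏ j, ∏ i ∈ Finset.Iio j, x j := by
        congr 1
        refine Finset.prod_comm' ?_
        intro i j
        simp [Finset.mem_Ioi, Finset.mem_Iio]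
    _ = (∏ i, x i ^ (m - 1 - (i : ℕ))) * ∏ j, x j ^ (j : ℕ) := by
        congr 1
        exact Finset.prod_congr rfl (fun j _ => by rw [Finset.prod_const, Fin.card_Iio])
    _ = ∏ i, x i ^ (m - 1) := by
        rw [← Finset.prod_mul_distrib]
        refine Finset.prod_congr rfl (fun i _ => ?_)
        rw [← pow_add]
        congr 1
        omega

lemma vand_pos {d : ℕ} (x y : Fin (d + 1) → ℝ) (hx : ∀ t, x t ≠ 0)
    (hpos : ∀ p q : Fin (d + 1), p < q → 0 < x p * y q - x q * y p) :
    0 < (Matrix.of fun (j t : Fin (d + 1)) => x t ^ (d - (j : ℕ)) * y t ^ (j : ℕ)).det := by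
  set z : Fin (d + 1) → ℝ := fun t => y t / x t with hz
  have hM : (Matrix.of fun (j t : Fin (d + 1)) => x t ^ (d - (j : ℕ)) * y t ^ (j : ℕ))
      = (Matrix.of fun (t j : Fin (d + 1)) => x t ^ d * Matrix.vandermonde z t j).transpose := by
    ext j t
    simp only [Matrix.transpose_apply, Matrix.of_apply, Matrix.vandermonde_apply, hz]
    rw [div_pow]
    have h1 : x t ^ d = x t ^ (d - (j : ℕ)) * x t ^ (j : ℕ) := by
      rw [← pow_add]; congr 1; omega
    rw [h1, mul_assoc, mul_comm (x t ^ (j : ℕ)), div_mul_cancel₀ _ (pow_ne_zero _ (hx t))]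
  rw [hM, Matrix.det_transpose, Matrix.det_mul_column, Matrix.det_vandermonde]
  have key : (∏ t, x t ^ d) * ∏ i, ∏ j ∈ Finset.Ioi i, (z j - z i)
      = ∏ i, ∏ j ∈ Finset.Ioi i, (x i * y j - x j * y i) := by
    have hp : ∀ t : Fin (d + 1), x t ^ d = x t ^ (d + 1 - 1) := by intro t; norm_num
    calc (∏ t, x t ^ d) * ∏ i, ∏ j ∈ Finset.Ioi i, (z j - z i)
        = (∏ i, ∏ j ∈ Finset.Ioi i, (x i * x j)) * ∏ i, ∏ j ∈ Finset.Ioi i, (z j - z i) := by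
          rw [prod_pairs]
          norm_num
      _ = ∏ i, ∏ j ∈ Finset.Ioi i, (x i * x j * (z j - z i)) := by
          rw [← Finset.prod_mul_distrib]
          refine Finset.prod_congr rfl (fun i _ => ?_)
          rw [← Finset.prod_mul_distrib]
      _ = ∏ i, ∏ j ∈ Finset.Ioi i, (x i * y j - x j * y i) := by
          refine Finset.prod_congr rfl (fun i _ => Finset.prod_congr rfl (fun j _ => ?_))
          have e0 : x i * x j * (z j - z i)
              = x i * (x j * (y j / x j)) - x j * (x i * (y i / x i)) := by rw [hz]; ring
          have e1 : x j * (y j / x j) = y j := by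
            rw [mul_comm, div_mul_cancel₀ _ (hx j)]
          have e2 : x i * (y i / x i) = y i := by
            rw [mul_comm, div_mul_cancel₀ _ (hx i)]
          rw [e0, e1, e2]
  rw [key]
  refine Finset.prod_pos (fun i _ => Finset.prod_pos (fun j hj => ?_))
  exact hpos i j (Finset.mem_Ioi.1 hj)

lemma deMoivre (d : ℕ) (ψ : ℝ) :
    Real.cos (d * ψ) = ∑ j ∈ Finset.range (d + 1),
      (Complex.I ^ j).re * (d.choose j : ℝ) * (Real.cos ψ ^ (d - j) * Real.sin ψ ^ j) ∧
    Real.sin (d * ψ) = ∑ j ∈ Finset.range (d + 1),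
      (Complex.I ^ j).im * (d.choose j : ℝ) * (Real.cos ψ ^ (d - j) * Real.sin ψ ^ j) := by
  have h1 : ((Real.sin ψ : ℂ) * Complex.I + (Real.cos ψ : ℂ)) = Complex.exp (ψ * Complex.I) := by
    rw [Complex.exp_mul_I, ← Complex.ofReal_cos, ← Complex.ofReal_sin]
    ring
  have hz : ((Real.sin ψ : ℂ) * Complex.I + (Real.cos ψ : ℂ)) ^ d
      = (Real.cos (d * ψ) : ℂ) + (Real.sin (d * ψ) : ℂ) * Complex.I := by
    rw [h1, ← Complex.exp_nat_mul]
    have h2 : (d : ℂ) * ((ψ : ℂ) * Complex.I) = ((d * ψ : ℝ) : ℂ) * Complex.I := by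
      push_cast; ring
    rw [h2, Complex.exp_mul_I, ← Complex.ofReal_cos, ← Complex.ofReal_sin]
  rw [add_pow] at hz
  have hterm : ∀ j ∈ Finset.range (d + 1),
      ((Real.sin ψ : ℂ) * Complex.I) ^ j * (Real.cos ψ : ℂ) ^ (d - j) * (d.choose j : ℂ)
      = ((Complex.I ^ j).re * (d.choose j : ℝ) * (Real.cos ψ ^ (d - j) * Real.sin ψ ^ j) : ℝ)
        + ((Complex.I ^ j).im * (d.choose j : ℝ) * (Real.cos ψ ^ (d - j) * Real.sin ψ ^ j) : ℝ) * Complex.I := by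
    intro j _
    rw [mul_pow]
    apply Complex.ext <;>
      simp [Complex.mul_re, Complex.mul_im, Complex.add_re, Complex.add_im] <;> ring
  rw [Finset.sum_congr rfl hterm] at hz
  rw [Finset.sum_add_distrib, ← Finset.sum_mul] at hz
  rw [Complex.ext_iff] at hz
  simp only [Complex.add_re, Complex.add_im, Complex.mul_re, Complex.mul_im, Complex.I_re,
    Complex.I_im, Complex.ofReal_re, Complex.ofReal_im, Complex.re_sum, Complex.im_sum,
    mul_zero, mul_one, zero_mul, sub_zero, add_zero, zero_add, zero_sub, neg_zero,
    Finset.sum_const_zero] at hz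
  exact ⟨hz.1.symm, hz.2.symm⟩

lemma exists_beta {n : ℕ} (φ : Fin n → ℝ) : ∃ β : ℝ, ∀ i, Real.cos (φ i - β) ≠ 0 := by
  by_contra h
  push_neg at h
  have hsub : (Set.univ : Set ℝ) ⊆ ⋃ i : Fin n, Set.range (fun m : ℤ => φ i - (2 * m + 1) * π / 2) := by
    intro β _
    obtain ⟨i, hi⟩ := h β
    obtain ⟨m, hm⟩ := Real.cos_eq_zero_iff.1 hi
    exact Set.mem_iUnion.2 ⟨i, ⟨m, by linarith⟩⟩
  have hcnt : (⋃ i : Fin n, Set.range (fun m : ℤ => φ i - (2 * m + 1) * π / 2)).Countable :=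
    Set.countable_iUnion (fun i => Set.countable_range _)
  exact Cardinal.not_countable_real (Set.Countable.mono hsub hcnt)

lemma construct {d n : ℕ} (hd : 1 ≤ d) (hn : d + 1 ≤ n) (r φ : Fin n → ℝ)
    (hr : ∀ i, 0 < r i)
    (hφ : ∀ a b : Fin n, a < b → 0 < φ b - φ a ∧ φ b - φ a < π) :
    ∃ C : Matrix (Fin (d + 1)) (Fin n) ℝ, posMinors C ∧ C.rank = d + 1 ∧
      (fun i => r i * Real.cos (d * φ i)) ∈ rowSpan C ∧
      (fun i => r i * Real.sin (d * φ i)) ∈ rowSpan C := by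
  obtain ⟨β, hβ⟩ := exists_beta φ
  set x : Fin n → ℝ := fun i => Real.cos (φ i - β) with hx
  set y : Fin n → ℝ := fun i => Real.sin (φ i - β) with hy
  set C : Matrix (Fin (d + 1)) (Fin n) ℝ :=
    Matrix.of (fun (j : Fin (d + 1)) (i : Fin n) =>
      r i * (x i ^ (d - (j : ℕ)) * y i ^ (j : ℕ))) with hC
  have hpm : posMinors C := by
    intro f hf
    have hsub : C.submatrix id f = Matrix.of (fun (j t : Fin (d + 1)) =>
        r (f t) * ((fun t => x (f t)) t ^ (d - (j : ℕ)) * (fun t => y (f t)) t ^ (j : ℕ))) := by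
      ext j t
      rfl
    rw [hsub]
    have h1 : (Matrix.of (fun (j t : Fin (d + 1)) =>
        r (f t) * ((fun t => x (f t)) t ^ (d - (j : ℕ)) * (fun t => y (f t)) t ^ (j : ℕ)))).det
        = (∏ t, r (f t)) * (Matrix.of (fun (j t : Fin (d + 1)) =>
          (fun t => x (f t)) t ^ (d - (j : ℕ)) * (fun t => y (f t)) t ^ (j : ℕ))).det :=
      Matrix.det_mul_row (fun t => r (f t)) _
    rw [h1]
    apply mul_pos (Finset.prod_pos (fun t _ => hr (f t)))
    apply vand_pos
    · intro t; exact hβ (f t)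
    · intro p q hpq
      have hlt := hf hpq
      have e : x (f p) * y (f q) - x (f q) * y (f p) = Real.sin (φ (f q) - φ (f p)) := by
        rw [hx, hy]
        have : φ (f q) - φ (f p) = (φ (f q) - β) - (φ (f p) - β) := by ring
        rw [this, Real.sin_sub]
        ring
      rw [e]
      exact Real.sin_pos_of_pos_of_lt_pi (hφ _ _ hlt).1 (hφ _ _ hlt).2
  have hrank : C.rank = d + 1 := by
    refine le_antisymm ?_ ?_
    · simpa using C.rank_le_card_height
    · set g : Fin (d + 1) → Fin n := Fin.castLE hn with hg
      have hgsm : StrictMono g := Fin.strictMono_castLE hn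
      have hdet := hpm g hgsm
      have hunit : IsUnit (C.submatrix id g) := by
        rw [Matrix.isUnit_iff_isUnit_det]
        exact isUnit_iff_ne_zero.2 (ne_of_gt hdet)
      have h2 : (C.submatrix id g).rank = d + 1 := by
        rw [Matrix.rank_of_isUnit _ hunit, Fintype.card_fin]
      -- C.submatrix id g = C * P
      set P : Matrix (Fin n) (Fin (d + 1)) ℝ :=
        Matrix.of (fun (i : Fin n) (t : Fin (d + 1)) => if g t = i then 1 else 0) with hP
      have h3 : C.submatrix id g = C * P := by
        ext j t
        rw [Matrix.mul_apply]
        simp only [hP, Matrix.of_apply, mul_ite, mul_one, mul_zero]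
        rw [Finset.sum_ite_eq Finset.univ (g t) (fun i => C j i)]
        simp [Matrix.submatrix_apply]
      calc (d + 1 : ℕ) = (C.submatrix id g).rank := h2.symm
        _ = (C * P).rank := by rw [h3]
        _ ≤ C.rank := Matrix.rank_mul_le_left C P
  have hmem : ∀ (u v : ℝ), (fun i => r i * (u * Real.cos ((d : ℝ) * (φ i - β))
      + v * Real.sin ((d : ℝ) * (φ i - β)))) ∈ rowSpan C := by
    intro u v
    set a : Fin (d + 1) → ℝ := fun j =>
      u * ((Complex.I ^ (j : ℕ)).re * (d.choose (j : ℕ) : ℝ))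
      + v * ((Complex.I ^ (j : ℕ)).im * (d.choose (j : ℕ) : ℝ)) with ha
    have hsum : (fun i => r i * (u * Real.cos ((d : ℝ) * (φ i - β))
        + v * Real.sin ((d : ℝ) * (φ i - β)))) = ∑ j : Fin (d + 1), a j • C j := by
      funext i
      rw [Finset.sum_apply]
      have hform : ∀ j : Fin (d + 1), (a j • C j) i
          = (u * ((Complex.I ^ (j : ℕ)).re * (d.choose (j : ℕ) : ℝ))
            + v * ((Complex.I ^ (j : ℕ)).im * (d.choose (j : ℕ) : ℝ)))
            * (r i * (Real.cos (φ i - β) ^ (d - (j : ℕ)) * Real.sin (φ i - β) ^ (j : ℕ))) :=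
        fun j => rfl
      rw [Finset.sum_congr rfl (fun j _ => hform j)]
      rw [Fin.sum_univ_eq_sum_range (fun j =>
        (u * ((Complex.I ^ j).re * (d.choose j : ℝ)) + v * ((Complex.I ^ j).im * (d.choose j : ℝ)))
        * (r i * (Real.cos (φ i - β) ^ (d - j) * Real.sin (φ i - β) ^ j))) (d + 1)]
      rw [(deMoivre d (φ i - β)).1, (deMoivre d (φ i - β)).2]
      rw [Finset.mul_sum, Finset.mul_sum, ← Finset.sum_add_distrib, Finset.mul_sum]
      exact Finset.sum_congr rfl (fun j _ => by ring)
    rw [hsum]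
    exact Submodule.sum_smul_mem _ a (fun j _ => Submodule.subset_span ⟨j, rfl⟩)
  refine ⟨C, hpm, hrank, ?_, ?_⟩
  · have e : (fun i => r i * Real.cos (d * φ i))
        = fun i => r i * (Real.cos (d * β) * Real.cos ((d : ℝ) * (φ i - β))
          + (-Real.sin (d * β)) * Real.sin ((d : ℝ) * (φ i - β))) := by
      funext i
      have h1 : (d : ℝ) * φ i = (d : ℝ) * (φ i - β) + d * β := by ring
      rw [h1, Real.cos_add]
      ring
    rw [e]
    exact hmem _ _
  · have e : (fun i => r i * Real.sin (d * φ i))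
        = fun i => r i * (Real.sin (d * β) * Real.cos ((d : ℝ) * (φ i - β))
          + Real.cos (d * β) * Real.sin ((d : ℝ) * (φ i - β))) := by
      funext i
      have h1 : (d : ℝ) * φ i = (d : ℝ) * (φ i - β) + d * β := by ring
      rw [h1, Real.sin_add]
      ring
    rw [e]
    exact hmem _ _

lemma steps_mono {n : ℕ} (θ : ℕ → ℝ) (hstep : ∀ i, i < n → 0 < θ (i + 1) - θ i) :
    ∀ p q : ℕ, p < q → q < n → θ p < θ q := by
  intro p q hpq hq
  induction q with
  | zero => omega
  | succ q ih =>
    rcases Nat.lt_succ_iff_lt_or_eq.1 hpq with h | h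
    · have h1 := ih h (by omega)
      have h2 := hstep q (by omega)
      linarith
    · subst h
      have h2 := hstep p (by omega)
      linarith

lemma steps_mono_le {n : ℕ} (θ : ℕ → ℝ) (hstep : ∀ i, i < n → 0 < θ (i + 1) - θ i) :
    ∀ p q : ℕ, p ≤ q → q < n → θ p ≤ θ q := by
  intro p q hpq hq
  rcases eq_or_lt_of_le hpq with rfl | h
  · exact le_refl _
  · exact (steps_mono θ hstep p q h hq).le

lemma altM_altM {m n : ℕ} (A : Matrix (Fin m) (Fin n) ℝ) : altM (altM A) = A := by
  ext i j
  simp only [altM, Matrix.of_apply]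
  rw [← mul_assoc, ← mul_pow]
  norm_num

noncomputable def altD (n : ℕ) : (Fin n → ℝ) →ₗ[ℝ] (Fin n → ℝ) where
  toFun := fun x j => (-1 : ℝ) ^ (j : ℕ) * x j
  map_add' := by intro x y; funext j; simp; ring
  map_smul' := by intro c x; funext j; simp; ring

lemma rowSpan_altM {m n : ℕ} (C : Matrix (Fin m) (Fin n) ℝ) :
    rowSpan (altM C) = Submodule.map (altD n) (rowSpan C) := by
  rw [rowSpan, rowSpan, Submodule.map_span]
  congr 1
  rw [← Set.range_comp]
  rfl


end Stmt4Aux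

/-- every `λ ∈ λ⁺_{k,n}` extends to some `Λ` with
`alt(Λ) ∈ Gr_{>0}(n-k+2,n)`, and every `λ̃ ∈ λ̃⁺_{k,n}` extends to some
`Λ̃ ∈ Gr_{>0}(k+2,n)`. -/
theorem stmt4 (n k : ℕ) (hk2 : 2 ≤ k) (hkn : k + 2 ≤ n) :
    (∀ lam : Matrix (Fin 2) (Fin n) ℝ, lamPlus n (k : ℤ) lam →
      ∃ Lam : Matrix (Fin (n - k + 2)) (Fin n) ℝ,
        GrPos (altM Lam) ∧ rowSpan lam ≤ rowSpan Lam) ∧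
    (∀ lat : Matrix (Fin 2) (Fin n) ℝ, latPlus n (k : ℤ) lat →
      ∃ Lat : Matrix (Fin (k + 2)) (Fin n) ℝ,
        GrPos Lat ∧ rowSpan lat ≤ rowSpan Lat) := by
  have hn2 : 2 ≤ n := by omega
  have hn1 : (1:ℕ) ≤ n - 1 := by omega
  constructor
  · -- part (i)
    intro lam hlam
    obtain ⟨hb, hw⟩ := hlam
    obtain ⟨r, θ, hrpos, hpol, hstep, hbound⟩ :=
      polar_lift hn2 (sgn (k : ℤ)) lam (((k : ℝ) - 1) * Real.pi) hb hw
    set d : ℕ := n - k + 1 with hd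
    have hdval : (d : ℝ) = (n : ℝ) - (k : ℝ) + 1 := by
      rw [hd]
      push_cast [Nat.cast_sub (by omega : k ≤ n)]
      ring
    have hdpos : (0:ℝ) < (d : ℝ) := by
      have : 1 ≤ d := by omega
      exact_mod_cast Nat.lt_of_lt_of_le Nat.zero_lt_one this
    set η : ℕ → ℝ := fun i => (i : ℝ) * Real.pi - θ i with hη
    have hηstep : ∀ i, i < n → 0 < η (i + 1) - η i := by
      intro i hi
      have h := (hstep i hi).2
      rw [hη]
      simp only
      push_cast
      linarith
    set φ : Fin n → ℝ := fun i => η (i : ℕ) / (d : ℝ) with hφdef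
    set rf : Fin n → ℝ := fun i => r (i : ℕ) with hrf
    have hηmono := steps_mono η hηstep
    have hηmono_le := steps_mono_le η hηstep
    have hηbound : η (n - 1) - η 0 < (d : ℝ) * Real.pi := by
      have hc1 : ((n - 1 : ℕ) : ℝ) = (n : ℝ) - 1 := by
        push_cast [Nat.cast_sub (by omega : 1 ≤ n)]
        ring
      have h1 := hbound.1
      rw [hη]
      simp only
      rw [hc1, hdval]
      push_cast
      linarith
    have hφ : ∀ a b : Fin n, a < b → 0 < φ b - φ a ∧ φ b - φ a < Real.pi := by
      intro a b hab
      have h1 : η (a : ℕ) < η (b : ℕ) := hηmono _ _ hab b.isLt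
      have h2 : η (b : ℕ) - η (a : ℕ) < (d : ℝ) * Real.pi := by
        have e1 : η (a : ℕ) ≥ η 0 := by
          rcases Nat.eq_zero_or_pos (a : ℕ) with h | h
          · rw [h]
          · exact (hηmono 0 _ h a.isLt).le
        have e2 : η (b : ℕ) ≤ η (n - 1) := hηmono_le _ _ (by omega) (by omega)
        linarith
      constructor
      · rw [hφdef]
        simp only
        rw [div_sub_div_same]
        exact div_pos (by linarith) hdpos
      · rw [hφdef]
        simp only
        rw [div_sub_div_same, div_lt_iff₀ hdpos]
        linarith
    obtain ⟨C, hpm, hrank, hc, hs⟩ := construct (by omega : 1 ≤ d) (by omega : d + 1 ≤ n) rf φ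
      (fun i => hrpos _ i.isLt) hφ
    have hcan : ∀ i : Fin n, (d : ℝ) * φ i = η (i : ℕ) := by
      intro i
      rw [hφdef]
      simp only
      rw [mul_div_cancel₀ _ (ne_of_gt hdpos)]
    have hsq : ∀ i : Fin n, ((-1:ℝ)) ^ (i : ℕ) * ((-1:ℝ)) ^ (i : ℕ) = 1 := by
      intro i
      rw [← mul_pow]
      norm_num
    refine ⟨altM C, ?_, ?_⟩
    · rw [altM_altM]
      exact ⟨by rw [hrank], hpm⟩
    · rw [rowSpan, Submodule.span_le]
      rintro v ⟨i, rfl⟩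
      show lam i ∈ (rowSpan (altM C) : Set (Fin n → ℝ))
      fin_cases i
      · show lam 0 ∈ (rowSpan (altM C) : Set (Fin n → ℝ))
        have hl0 : lam 0 = altD n (fun i : Fin n => rf i * Real.cos ((d : ℝ) * φ i)) := by
          funext i
          show lam 0 i = (-1:ℝ) ^ (i : ℕ) * (rf i * Real.cos ((d : ℝ) * φ i))
          rw [hcan i]
          have hηi : η (i : ℕ) = ((i : ℕ) : ℝ) * Real.pi - θ (i : ℕ) := rfl
          rw [hηi, Real.cos_nat_mul_pi_sub]
          have hp := (hpol (i : ℕ) i.isLt).1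
          rw [show (⟨(i : ℕ), i.isLt⟩ : Fin n) = i from Fin.eta i i.isLt] at hp
          rw [hp]
          have := hsq i
          linear_combination (-(r (i : ℕ) * Real.cos (θ (i : ℕ)))) * this
        rw [rowSpan_altM, hl0]
        exact Submodule.mem_map_of_mem hc
      · show lam 1 ∈ (rowSpan (altM C) : Set (Fin n → ℝ))
        have hl1 : lam 1 = altD n (-(fun i : Fin n => rf i * Real.sin ((d : ℝ) * φ i))) := by
          funext i
          show lam 1 i = (-1:ℝ) ^ (i : ℕ) * (-(rf i * Real.sin ((d : ℝ) * φ i)))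
          rw [hcan i]
          have hηi : η (i : ℕ) = ((i : ℕ) : ℝ) * Real.pi - θ (i : ℕ) := rfl
          rw [hηi, Real.sin_nat_mul_pi_sub]
          have hp := (hpol (i : ℕ) i.isLt).2
          rw [show (⟨(i : ℕ), i.isLt⟩ : Fin n) = i from Fin.eta i i.isLt] at hp
          rw [hp]
          have := hsq i
          linear_combination (-(r (i : ℕ) * Real.sin (θ (i : ℕ)))) * this
        rw [rowSpan_altM, hl1]
        exact Submodule.mem_map_of_mem (Submodule.neg_mem _ hs)
  · -- part (ii)
    intro lat hlat
    obtain ⟨hb, hw⟩ := hlat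
    obtain ⟨r, θ, hrpos, hpol, hstep, hbound⟩ :=
      polar_lift hn2 (sgn (k : ℤ)) lat (((k : ℝ) + 1) * Real.pi) hb hw
    set d : ℕ := k + 1 with hd
    have hdpos : (0:ℝ) < (d : ℝ) := by positivity
    set φ : Fin n → ℝ := fun i => θ (i : ℕ) / (d : ℝ) with hφdef
    set rf : Fin n → ℝ := fun i => r (i : ℕ) with hrf
    have hθmono := steps_mono θ (fun i hi => (hstep i hi).1)
    have hθmono_le := steps_mono_le θ (fun i hi => (hstep i hi).1)
    have hφ : ∀ a b : Fin n, a < b → 0 < φ b - φ a ∧ φ b - φ a < Real.pi := by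
      intro a b hab
      have h1 : θ (a : ℕ) < θ (b : ℕ) := hθmono _ _ hab b.isLt
      have h2 : θ (b : ℕ) - θ (a : ℕ) < (d : ℝ) * Real.pi := by
        have e1 : θ (a : ℕ) ≥ θ 0 := by
          rcases Nat.eq_zero_or_pos (a : ℕ) with h | h
          · rw [h]
          · exact (hθmono 0 _ h a.isLt).le
        have e2 : θ (b : ℕ) ≤ θ (n - 1) := hθmono_le _ _ (by omega) (by omega)
        have e3 : θ (n - 1) - θ 0 < ((k : ℝ) + 1) * Real.pi := hbound.2
        have : (d : ℝ) = (k : ℝ) + 1 := by rw [hd]; push_cast; ring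
        rw [this]
        linarith
      constructor
      · rw [hφdef]
        simp only
        rw [div_sub_div_same]
        exact div_pos (by linarith) hdpos
      · rw [hφdef]
        simp only
        rw [div_sub_div_same, div_lt_iff₀ hdpos]
        linarith [h2]
    obtain ⟨C, hpm, hrank, hc, hs⟩ := construct (by omega : 1 ≤ d) (by omega : d + 1 ≤ n) rf φ
      (fun i => hrpos _ i.isLt) hφ
    refine ⟨C, ⟨?_, hpm⟩, ?_⟩
    · rw [hrank]
    · have hcan : ∀ i : Fin n, (d : ℝ) * φ i = θ (i : ℕ) := by
        intro i
        rw [hφdef]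
        simp only
        rw [mul_div_cancel₀ _ (ne_of_gt hdpos)]
      rw [rowSpan]
      rw [Submodule.span_le]
      rintro v ⟨i, rfl⟩
      show lat i ∈ (rowSpan C : Set (Fin n → ℝ))
      fin_cases i
      · show lat 0 ∈ (rowSpan C : Set (Fin n → ℝ))
        have h0 : lat 0 = fun i : Fin n => rf i * Real.cos ((d : ℝ) * φ i) := by
          funext i
          rw [hcan i]
          have := (hpol (i : ℕ) i.isLt).1
          simpa using this
        rw [h0]
        exact hc
      · show lat 1 ∈ (rowSpan C : Set (Fin n → ℝ))
        have h1 : lat 1 = fun i : Fin n => rf i * Real.sin ((d : ℝ) * φ i) := by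
          funext i
          rw [hcan i]
          have := (hpol (i : ℕ) i.isLt).2
          simpa using this
        rw [h1]
        exact hs
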